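/- Fix a sequence x_1, x_2, ..., x_T taking values in a finite set X of size at most L, and a partition of [1,T] into K consecutive episodes with lengths T_1,...,T_K each at most T̄. For x ∈ X, let ν_k(x) be the number of occurrences of x in episode k and N_k(x) the number of occurrences before episode k. Then Σ_{x∈X} Σ_{k=1}^K ν_k(x)/sqrt(max{1, N_k(x)}) ≤ 2L T̄ + (2+√2) sqrt(L T). -/

import Mathlib

open Finset

lemma aux_ineq (n g : ℕ) (h : g < n) :
    (g : ℝ) / Real.sqrt n ≤ (1 + Real.sqrt 2) * (Real.sqrt (n + g) - Real.sqrt n) := by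
  have hn0 : 0 < n := by omega
  have hn1 : (1:ℝ) ≤ n := by exact_mod_cast hn0
  have ha : (0:ℝ) < Real.sqrt n := Real.sqrt_pos.mpr (by linarith)
  have hb2 : (Real.sqrt ((n:ℝ) + g))^2 = (n:ℝ) + g := Real.sq_sqrt (by positivity)
  have ha2 : (Real.sqrt n)^2 = (n:ℝ) := Real.sq_sqrt (by linarith)
  have hc2 : (Real.sqrt 2)^2 = (2:ℝ) := Real.sq_sqrt (by norm_num)
  have hc0 : (0:ℝ) ≤ Real.sqrt 2 := Real.sqrt_nonneg _
  have hb0 : (0:ℝ) ≤ Real.sqrt ((n:ℝ) + g) := Real.sqrt_nonneg _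
  have hba : Real.sqrt n ≤ Real.sqrt ((n:ℝ) + g) :=
    Real.sqrt_le_sqrt (le_add_of_nonneg_right (by positivity))
  have hgn : (g:ℝ) < n := by exact_mod_cast h
  have hbca : Real.sqrt ((n:ℝ) + g) ≤ Real.sqrt 2 * Real.sqrt n := by
    rw [← Real.sqrt_mul (by norm_num)]
    exact Real.sqrt_le_sqrt (by linarith)
  rw [div_le_iff₀ ha]
  nlinarith [mul_nonneg (sub_nonneg.mpr hba) (sub_nonneg.mpr hbca)]

lemma aux_sum_nu {K Tbar : ℕ} (N ν : ℕ → ℕ) (hN0 : N 0 = 0)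
    (hrec : ∀ k, N (k + 1) = N k + ν k) (hT : ∀ k < K, ν k ≤ Tbar) :
    ∑ k ∈ range K, ((ν k : ℝ) / Real.sqrt (max 1 (N k)))
      ≤ 2 * Tbar + (1 + Real.sqrt 2) * Real.sqrt (N K) := by
  have hsum : ∀ n, ∑ k ∈ range n, ν k = N n := by
    intro n
    induction n with
    | zero => simp [hN0]
    | succ n ih => rw [Finset.sum_range_succ, ih, hrec]
  have hdenom : ∀ k, (1:ℝ) ≤ Real.sqrt (max 1 (N k)) := by
    intro k
    have := Real.sqrt_le_sqrt (le_max_left (1:ℝ) (N k))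
    simpa using this
  rw [← Finset.sum_filter_add_sum_filter_not (range K) (fun k => N k ≤ ν k)]
  have part1 : ∑ k ∈ (range K).filter (fun k => N k ≤ ν k),
      ((ν k : ℝ) / Real.sqrt (max 1 (N k))) ≤ 2 * Tbar := by
    set S := (range K).filter (fun k => N k ≤ ν k) with hS
    rcases S.eq_empty_or_nonempty with he | hne
    · simp only [he, Finset.sum_empty]; positivity
    · set k0 := S.max' hne with hk0
      have hk0S : k0 ∈ S := S.max'_mem hne
      have hk0K : k0 < K := Finset.mem_range.mp (Finset.mem_filter.mp hk0S).1
      have hk0le : N k0 ≤ ν k0 := (Finset.mem_filter.mp hk0S).2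
      calc ∑ k ∈ S, ((ν k : ℝ) / Real.sqrt (max 1 (N k)))
          ≤ ∑ k ∈ S, (ν k : ℝ) := by
            apply Finset.sum_le_sum
            intro k _
            exact div_le_self (by positivity) (hdenom k)
        _ ≤ ∑ k ∈ range (k0 + 1), (ν k : ℝ) := by
            apply Finset.sum_le_sum_of_subset_of_nonneg
            · intro k hk
              exact Finset.mem_range.mpr (Nat.lt_succ_of_le (S.le_max' k hk))
            · intros; positivity
        _ = ((N (k0 + 1) : ℕ) : ℝ) := by rw [← Nat.cast_sum, hsum]
        _ ≤ 2 * Tbar := by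
            have h1 := hrec k0
            have h2 := hT k0 hk0K
            have : N (k0 + 1) ≤ 2 * Tbar := by omega
            exact_mod_cast this
  have part2 : ∑ k ∈ (range K).filter (fun k => ¬ N k ≤ ν k),
      ((ν k : ℝ) / Real.sqrt (max 1 (N k)))
      ≤ (1 + Real.sqrt 2) * Real.sqrt (N K) := by
    have step : ∀ k ∈ (range K).filter (fun k => ¬ N k ≤ ν k),
        ((ν k : ℝ) / Real.sqrt (max 1 (N k)))
          ≤ (1 + Real.sqrt 2) * (Real.sqrt (N (k+1)) - Real.sqrt (N k)) := by
      intro k hk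
      have hlt : ν k < N k := by
        have := (Finset.mem_filter.mp hk).2; omega
      have hmax : (max 1 ((N k : ℝ))) = (N k : ℝ) := by
        have : (1:ℝ) ≤ N k := by exact_mod_cast Nat.one_le_iff_ne_zero.mpr (by omega)
        exact max_eq_right this
      rw [hmax]
      have := aux_ineq (N k) (ν k) hlt
      have hcast : ((N (k+1) : ℕ) : ℝ) = (N k : ℝ) + ν k := by
        rw [hrec k]; push_cast; ring
      rw [hcast]
      exact this
    calc ∑ k ∈ (range K).filter (fun k => ¬ N k ≤ ν k),
        ((ν k : ℝ) / Real.sqrt (max 1 (N k)))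
        ≤ ∑ k ∈ (range K).filter (fun k => ¬ N k ≤ ν k),
            (1 + Real.sqrt 2) * (Real.sqrt (N (k+1)) - Real.sqrt (N k)) :=
          Finset.sum_le_sum step
      _ ≤ ∑ k ∈ range K, (1 + Real.sqrt 2) * (Real.sqrt (N (k+1)) - Real.sqrt (N k)) := by
          apply Finset.sum_le_sum_of_subset_of_nonneg (Finset.filter_subset _ _)
          intro k _ _
          have : Real.sqrt (N k) ≤ Real.sqrt (N (k+1)) := by
            apply Real.sqrt_le_sqrt
            exact_mod_cast (by rw [hrec]; omega : N k ≤ N (k+1))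
          have h2 : (0:ℝ) ≤ 1 + Real.sqrt 2 := by positivity
          nlinarith
      _ = (1 + Real.sqrt 2) * Real.sqrt (N K) := by
          rw [← Finset.mul_sum, Finset.sum_range_sub (fun k => Real.sqrt (N k))]
          simp [hN0]
  linarith

theorem episodic_count_bound {X : Type*} [Fintype X] [DecidableEq X]
    (L T K Tbar : ℕ) (hL : Fintype.card X ≤ L)
    (x : ℕ → X) (Tlen : ℕ → ℕ)
    (hsum : ∑ k ∈ Finset.range K, Tlen k = T)
    (hTbar : ∀ k < K, Tlen k ≤ Tbar) :
    (∑ a : X, ∑ k ∈ Finset.range K,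
        (((Finset.Ico (∑ j ∈ Finset.range k, Tlen j)
            ((∑ j ∈ Finset.range k, Tlen j) + Tlen k)).filter
              (fun t => x t = a)).card : ℝ) /
          Real.sqrt (max 1
            (((Finset.range (∑ j ∈ Finset.range k, Tlen j)).filter
              (fun t => x t = a)).card)))
      ≤ 2 * L * Tbar + (2 + Real.sqrt 2) * Real.sqrt (L * T) := by
  set s : ℕ → ℕ := fun k => ∑ j ∈ Finset.range k, Tlen j with hs
  set Nc : X → ℕ → ℕ := fun a k => ((Finset.range (s k)).filter (fun t => x t = a)).card with hNc
  set νc : X → ℕ → ℕ := fun a k =>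
    ((Finset.Ico (s k) (s k + Tlen k)).filter (fun t => x t = a)).card with hνc
  have hrec : ∀ a k, Nc a (k + 1) = Nc a k + νc a k := by
    intro a k
    have h1 : s (k + 1) = s k + Tlen k := Finset.sum_range_succ _ _
    have h2 : Finset.range (s (k+1)) = Finset.range (s k) ∪ Finset.Ico (s k) (s k + Tlen k) := by
      rw [h1, Finset.range_eq_Ico, Finset.range_eq_Ico]
      exact (Finset.Ico_union_Ico_eq_Ico (Nat.zero_le _) (Nat.le_add_right _ _)).symm
    have hdisj : Disjoint ((Finset.range (s k)).filter (fun t => x t = a))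
        ((Finset.Ico (s k) (s k + Tlen k)).filter (fun t => x t = a)) := by
      apply Finset.disjoint_filter_filter
      rw [Finset.range_eq_Ico]
      exact Finset.Ico_disjoint_Ico_consecutive _ _ _
    simp only [hNc, hνc, h2, Finset.filter_union]
    exact Finset.card_union_of_disjoint hdisj
  have hν_le : ∀ a, ∀ k < K, νc a k ≤ Tbar := by
    intro a k hk
    calc νc a k ≤ (Finset.Ico (s k) (s k + Tlen k)).card := Finset.card_filter_le _ _
      _ = Tlen k := by rw [Nat.card_Ico]; omega
      _ ≤ Tbar := hTbar k hk
  have hN0 : ∀ a, Nc a 0 = 0 := by intro a; simp [hNc, hs]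
  have hNT : ∀ a, Nc a K = ((Finset.range T).filter (fun t => x t = a)).card := by
    intro a; simp only [hNc, hs, hsum]
  have hpartition : ∑ a : X, (Nc a K : ℝ) = T := by
    have h := Finset.card_eq_sum_card_fiberwise
      (f := x) (s := Finset.range T) (t := Finset.univ) (fun t _ => Finset.mem_univ _)
    simp only [Finset.card_range] at h
    rw [show ∑ a : X, (Nc a K : ℝ) = ((∑ a : X, Nc a K : ℕ) : ℝ) by push_cast; rfl]
    simp only [hNT]
    exact_mod_cast congrArg (Nat.cast : ℕ → ℝ) h.symm
  calc (∑ a : X, ∑ k ∈ Finset.range K,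
        ((νc a k : ℝ) / Real.sqrt (max 1 (Nc a k))))
      ≤ ∑ a : X, (2 * Tbar + (1 + Real.sqrt 2) * Real.sqrt (Nc a K)) := by
        apply Finset.sum_le_sum
        intro a _
        exact aux_sum_nu (Nc a) (νc a) (hN0 a) (hrec a) (hν_le a)
    _ = (Fintype.card X : ℝ) * (2 * Tbar) + (1 + Real.sqrt 2) * ∑ a : X, Real.sqrt (Nc a K) := by
        rw [Finset.sum_add_distrib, Finset.sum_const, nsmul_eq_mul, Finset.card_univ,
          ← Finset.mul_sum]
    _ ≤ 2 * L * Tbar + (2 + Real.sqrt 2) * Real.sqrt (L * T) := by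
        have h1 : (Fintype.card X : ℝ) * (2 * Tbar) ≤ 2 * L * Tbar := by
          have : (Fintype.card X : ℝ) ≤ L := by exact_mod_cast hL
          nlinarith [Nat.cast_nonneg (α := ℝ) Tbar]
        have hcs : ∑ a : X, Real.sqrt (Nc a K) ≤ Real.sqrt (L * T) := by
          have h2 := Finset.sum_mul_sq_le_sq_mul_sq Finset.univ
            (fun _ : X => (1:ℝ)) (fun a => Real.sqrt (Nc a K))
          simp only [one_pow, one_mul, Finset.sum_const, nsmul_eq_mul, mul_one,
            Real.sq_sqrt (Nat.cast_nonneg _)] at h2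
          rw [hpartition, Finset.card_univ] at h2
          have h3 : (Fintype.card X : ℝ) * T ≤ (L : ℝ) * T := by
            have : (Fintype.card X : ℝ) ≤ L := by exact_mod_cast hL
            nlinarith [Nat.cast_nonneg (α := ℝ) T]
          have h4 : (∑ a : X, Real.sqrt (Nc a K))^2 ≤ (L:ℝ) * T := le_trans h2 h3
          have h5 : (0:ℝ) ≤ ∑ a : X, Real.sqrt (Nc a K) :=
            Finset.sum_nonneg fun a _ => Real.sqrt_nonneg _
          calc ∑ a : X, Real.sqrt (Nc a K)
              = Real.sqrt ((∑ a : X, Real.sqrt (Nc a K))^2) := by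
                rw [Real.sqrt_sq h5]
            _ ≤ Real.sqrt ((L:ℝ) * T) := Real.sqrt_le_sqrt h4
        have h6 : (0:ℝ) ≤ Real.sqrt ((L:ℝ) * T) := Real.sqrt_nonneg _
        have h7 : (1 + Real.sqrt 2) * ∑ a : X, Real.sqrt (Nc a K)
            ≤ (2 + Real.sqrt 2) * Real.sqrt ((L:ℝ) * T) := by
          have hs2 : (0:ℝ) ≤ Real.sqrt 2 := Real.sqrt_nonneg _
          have h8 : (0:ℝ) ≤ ∑ a : X, Real.sqrt (Nc a K) :=
            Finset.sum_nonneg fun a _ => Real.sqrt_nonneg _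
          nlinarith
        push_cast
        linarith
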